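/- With the same setup of square-free quadrics F_{abc} = λ_{abc} x_a x_b + μ_{abc} x_a x_c + ν_{abc} x_b x_c satisfying the Koszul relations (-1)^a x_a F_{bcd} + (-1)^{b-1} x_b F_{acd} + (-1)^{c-2} x_c F_{abd} + (-1)^{d-3} x_d F_{abc} = 0 for all 0 ≤ a < b < c < d ≤ n, one has for every 0 ≤ d < e < f < g ≤ n the relation (-1)^{e-1} ν_{dfg} + (-1)^{f-2} ν_{deg} + (-1)^{g-3} ν_{def} = 0. -/
import Mathlib


open MvPolynomial

attribute [local instance] MvPolynomial.gradedAlgebra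

/-- Comparing coefficients in the Koszul relations yields, for every `d < e < f < g`,
the relation `(-1)^{e-1} ν_{dfg} + (-1)^{f-2} ν_{deg} + (-1)^{g-3} ν_{def} = 0`. -/
theorem stmt_1 {k : Type*} [Field k] (n : ℕ)
    (I : Ideal (MvPolynomial (Fin (n + 1)) k))
    (hI : Ideal.IsHomogeneous (homogeneousSubmodule (Fin (n + 1)) k) I)
    (lam mu nu : Fin (n + 1) → Fin (n + 1) → Fin (n + 1) → k)
    (F : Fin (n + 1) → Fin (n + 1) → Fin (n + 1) → MvPolynomial (Fin (n + 1)) k)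
    (hF : ∀ a b c : Fin (n + 1), a < b → b < c →
      F a b c = C (lam a b c) * X a * X b + C (mu a b c) * X a * X c
        + C (nu a b c) * X b * X c)
    (hFI : ∀ a b c : Fin (n + 1), a < b → b < c → F a b c ∈ I)
    (hK : ∀ a b c d : Fin (n + 1), a < b → b < c → c < d →
      C ((-1 : k) ^ (a : ℕ)) * X a * F b c d - C ((-1 : k) ^ (b : ℕ)) * X b * F a c d
        + C ((-1 : k) ^ (c : ℕ)) * X c * F a b d - C ((-1 : k) ^ (d : ℕ)) * X d * F a b c = 0) :
    ∀ d e f g : Fin (n + 1), d < e → e < f → f < g →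
      -((-1 : k) ^ (e : ℕ) * nu d f g) + (-1 : k) ^ (f : ℕ) * nu d e g
        - (-1 : k) ^ (g : ℕ) * nu d e f = 0 := by
  intro d e f g hde hef hfg
  have h := hK d e f g hde hef hfg
  rw [hF e f g hef hfg, hF d f g (hde.trans hef) hfg,
      hF d e g hde (hef.trans hfg), hF d e f hde hef] at h
  have h2 := congrArg (eval (fun i => if i = d then (0 : k) else 1)) h
  have hed : e ≠ d := hde.ne'
  have hfd : f ≠ d := (hde.trans hef).ne'
  have hgd : g ≠ d := (hde.trans (hef.trans hfg)).ne'
  simp only [map_add, map_sub, map_mul, eval_C, eval_X, if_pos rfl,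
    if_neg hed, if_neg hfd, if_neg hgd, map_zero, ite_true] at h2
  linear_combination h2
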